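/- (Product channels are weight contracting, Proposition in Appendix E.) For each j ∈ Fin n let Φ_j be a linear map on 2 × 2 complex matrices with Φ_j(I₂) = I₂ (unital). Let Φ be a linear map on 2^n × 2^n complex matrices satisfying Φ(P_a) = Φ_1(σ_{a 1}) ⊗ ⋯ ⊗ Φ_n(σ_{a n}) (the n-fold Kronecker product) for every string a ∈ (Fin n → Fin 4). Then for all strings a, b with |b| > |a|, tr(P_b * Φ(P_a)) = 0; that is, the Pauli expansion of Φ(P_a) contains no Pauli string of weight greater than |a|. -/

import Mathlib

open Matrix Finset

noncomputable section

/-- The four single-qubit Pauli matrices: σ₀ = I, σ₁ = X, σ₂ = Y, σ₃ = Z. -/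
def pauli : Fin 4 → Matrix (Fin 2) (Fin 2) ℂ
  | 0 => 1
  | 1 => !![0, 1; 1, 0]
  | 2 => !![0, -Complex.I; Complex.I, 0]
  | 3 => !![1, 0; 0, -1]

/-- The `n`-qubit Pauli string `P_a = σ_{a 1} ⊗ ⋯ ⊗ σ_{a n}` (n-fold Kronecker product),
a `2^n × 2^n` complex matrix indexed by `Fin n → Fin 2`. -/
def PauliString {n : ℕ} (a : Fin n → Fin 4) :
    Matrix (Fin n → Fin 2) (Fin n → Fin 2) ℂ :=
  fun i k => ∏ j, pauli (a j) (i j) (k j)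

/-- `⟨a,b⟩ ∈ {0,1}`: parity of the number of positions where `a` and `b` anticommute. -/
def ppair {n : ℕ} (a b : Fin n → Fin 4) : ℕ :=
  (Finset.univ.filter fun j => a j ≠ 0 ∧ b j ≠ 0 ∧ a j ≠ b j).card % 2

/-- The weight `|a|` of a Pauli string: the number of non-identity tensor factors. -/
def pweight {n : ℕ} (a : Fin n → Fin 4) : ℕ :=
  (Finset.univ.filter fun j => a j ≠ 0).card

/-- Product channels are weight contracting (Appendix E): if `Φ` acts factor-wise via
unital maps `Φ_j`, then the Pauli expansion of `Φ(P_a)` contains no Pauli string of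
weight greater than `|a|`. -/
theorem product_channel_weight_contracting {n : ℕ}
    (Φj : Fin n → (Matrix (Fin 2) (Fin 2) ℂ →ₗ[ℂ] Matrix (Fin 2) (Fin 2) ℂ))
    (hunital : ∀ j, Φj j (pauli 0) = pauli 0)
    (Φ : Matrix (Fin n → Fin 2) (Fin n → Fin 2) ℂ →ₗ[ℂ]
          Matrix (Fin n → Fin 2) (Fin n → Fin 2) ℂ)
    (hΦ : ∀ a : Fin n → Fin 4,
      Φ (PauliString a) = fun i k => ∏ j, (Φj j) (pauli (a j)) (i j) (k j))
    (a b : Fin n → Fin 4) (h : pweight a < pweight b) :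
    (PauliString b * Φ (PauliString a)).trace = 0 := by
  -- find a coordinate where b is nonzero but a is zero
  have hsub : ¬ ((Finset.univ.filter fun j => b j ≠ 0) ⊆
      (Finset.univ.filter fun j => a j ≠ 0)) := by
    intro hs
    exact absurd (Finset.card_le_card hs) (not_le.mpr h)
  obtain ⟨j₀, hj₀b, hj₀a⟩ := Finset.not_subset.mp hsub
  simp only [Finset.mem_filter, Finset.mem_univ, true_and, not_not] at hj₀b hj₀a
  -- factorize the trace
  set F : Fin n → Fin 2 × Fin 2 → ℂ :=
    fun j q => pauli (b j) q.1 q.2 * (Φj j) (pauli (a j)) q.2 q.1 with hF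
  have key : (PauliString b * Φ (PauliString a)).trace
      = ∏ j, ∑ q : Fin 2 × Fin 2, F j q := by
    have e1 : (PauliString b * Φ (PauliString a)).trace
        = ∑ p : (Fin n → Fin 2) × (Fin n → Fin 2), ∏ j, F j (p.1 j, p.2 j) := by
      rw [Fintype.sum_prod_type]
      simp only [Matrix.trace, Matrix.diag, Matrix.mul_apply]
      simp only [Matrix.trace, Matrix.diag, Matrix.mul_apply, PauliString, hΦ, hF,
        ← Finset.prod_mul_distrib]
    rw [e1, Fintype.prod_sum]
    exact Fintype.sum_equiv (Equiv.arrowProdEquivProdArrow (Fin n) (fun _ => Fin 2) (fun _ => Fin 2)).symm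
      (fun p => ∏ j, F j (p.1 j, p.2 j)) (fun g => ∏ j, F j (g j)) (fun p => rfl)
  rw [key]
  apply Finset.prod_eq_zero (Finset.mem_univ j₀)
  rw [hF]
  simp only [hj₀a, hunital j₀]
  have h1 : pauli (0 : Fin 4) = 1 := rfl
  rw [h1]
  rw [Fintype.sum_prod_type]
  obtain ⟨c, hc⟩ : ∃ c, b j₀ = c := ⟨_, rfl⟩
  rw [hc] at hj₀b ⊢
  fin_cases c <;>
    simp_all [pauli, Matrix.one_apply, Fin.sum_univ_two]
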